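/- Let A be a Hopf algebra with a Hopf algebra projection: ι: B → A a Hopf algebra inclusion and ϖ: A → B a Hopf algebra map with ϖ∘ι = id. Define the coinvariants R = {a ∈ A | (id ⊗ ϖ)∘Δ(a) = a ⊗ 1}. Then R = {Σ a₁ S(ϖ(a₂)) | a ∈ A}, where Δ(a) = Σ a₁ ⊗ a₂ in Sweedler notation and S is the antipode of B (or A). -/

import Mathlib

open TensorProduct

open TensorProduct Coalgebra

suppress_compilation

section Conv

variable {k : Type*} [CommSemiring k]
variable {C : Type*} [AddCommMonoid C] [Module k C] [Coalgebra k C]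
variable {M : Type*} [Semiring M] [Algebra k M]

/-- Convolution product of linear maps from a coalgebra to an algebra. -/
def conv (f g : C →ₗ[k] M) : C →ₗ[k] M :=
  LinearMap.mul' k M ∘ₗ TensorProduct.map f g ∘ₗ Coalgebra.comul

lemma conv_repr {J : Type*} (f g : C →ₗ[k] M) {a : C} (r : Coalgebra.Repr k a J) :
    conv f g a = ∑ i ∈ r.index, f (r.left i) * g (r.right i) := by
  simp [conv, ← r.eq, map_sum]

lemma conv_assoc (f g h : C →ₗ[k] M) : conv (conv f g) h = conv f (conv g h) := by
  ext a
  set r := ℛ k a with hr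
  set r1 : ∀ i : r.ι, Coalgebra.Repr k (r.left i) (_ × _) := fun i => ℛ k (r.left i) with hr1
  set r2 : ∀ i : r.ι, Coalgebra.Repr k (r.right i) (_ × _) := fun i => ℛ k (r.right i) with hr2
  have key := Coalgebra.sum_map_tmul_tmul_eq f g h a (repr := r) (a₁ := r1) (a₂ := r2)
  have key2 := congrArg (LinearMap.mul' k M ∘ₗ LinearMap.lTensor M (LinearMap.mul' k M)) key
  simp only [map_sum, LinearMap.comp_apply, LinearMap.lTensor_tmul, LinearMap.mul'_apply] at key2
  rw [conv_repr _ _ r, conv_repr _ _ r]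
  calc ∑ i ∈ r.index, conv f g (r.left i) * h (r.right i)
      = ∑ i ∈ r.index, ∑ j ∈ (r1 i).index,
          f ((r1 i).left j) * (g ((r1 i).right j) * h (r.right i)) := by
        refine Finset.sum_congr rfl fun i _ => ?_
        rw [conv_repr _ _ (r1 i), Finset.sum_mul]
        simp [mul_assoc]
    _ = ∑ i ∈ r.index, ∑ j ∈ (r2 i).index,
          f (r.left i) * (g ((r2 i).left j) * h ((r2 i).right j)) := key2.symm
    _ = ∑ i ∈ r.index, f (r.left i) * conv g h (r.right i) := by
        refine Finset.sum_congr rfl fun i _ => ?_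
        rw [conv_repr _ _ (r2 i), Finset.mul_sum]

lemma conv_counit_right (f : C →ₗ[k] M) :
    conv f (Algebra.linearMap k M ∘ₗ Coalgebra.counit) = f := by
  ext a
  set r := ℛ k a with hr
  rw [conv_repr _ _ r]
  have h1 : ∑ i ∈ r.index, Coalgebra.counit (R := k) (r.right i) • r.left i = a := by
    have h := Coalgebra.sum_tmul_counit_eq r
    apply_fun TensorProduct.rid k C at h
    rw [map_sum] at h
    simp only [TensorProduct.rid_tmul, one_smul] at h
    exact h
  calc ∑ i ∈ r.index, f (r.left i) * (Algebra.linearMap k M ∘ₗ Coalgebra.counit) (r.right i)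
      = ∑ i ∈ r.index, Coalgebra.counit (R := k) (r.right i) • f (r.left i) := by
        refine Finset.sum_congr rfl fun i _ => ?_
        simp [Algebra.smul_def, ← Algebra.commutes]
    _ = f (∑ i ∈ r.index, Coalgebra.counit (R := k) (r.right i) • r.left i) := by
        rw [map_sum]; simp
    _ = f a := by rw [h1]

end Conv
section HopfKey

variable {k : Type*} [CommSemiring k]
variable {B : Type*} [Semiring B] [HopfAlgebra k B]

local notation "S" => HopfAlgebra.antipode (R := k) (A := B)

lemma conv_comul_comulS :
    conv (Coalgebra.comul : B →ₗ[k] B ⊗[k] B) (Coalgebra.comul ∘ₗ S) =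
      Algebra.linearMap k (B ⊗[k] B) ∘ₗ Coalgebra.counit := by
  ext a
  set r := ℛ k a with hr
  rw [conv_repr _ _ r]
  calc ∑ i ∈ r.index, Coalgebra.comul (R := k) (r.left i) *
        (Coalgebra.comul (R := k) ∘ₗ S) (r.right i)
      = Coalgebra.comul (R := k) (∑ i ∈ r.index, r.left i * S (r.right i)) := by
        rw [map_sum]
        exact Finset.sum_congr rfl fun i _ => by simp [Bialgebra.comul_mul]
    _ = (Algebra.linearMap k (B ⊗[k] B) ∘ₗ Coalgebra.counit) a := by
        rw [HopfAlgebra.sum_mul_antipode_eq_algebraMap_counit r]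
        simp

lemma conv_antipodeTmulOne_comul :
    conv (((TensorProduct.mk k B B).flip 1) ∘ₗ S) (Coalgebra.comul) =
      TensorProduct.mk k B B 1 := by
  ext a
  set r := ℛ k a with hr
  set r1 : ∀ i : r.ι, Coalgebra.Repr k (r.left i) (_ × _) := fun i => ℛ k (r.left i) with hr1
  set r2 : ∀ i : r.ι, Coalgebra.Repr k (r.right i) (_ × _) := fun i => ℛ k (r.right i) with hr2
  rw [conv_repr _ _ r]
  have key := Coalgebra.sum_tmul_tmul_eq r r1 r2
  set T : B ⊗[k] (B ⊗[k] B) →ₗ[k] B ⊗[k] B :=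
    ((LinearMap.mul' k B ∘ₗ (HopfAlgebra.antipode (R := k)).rTensor B).rTensor B) ∘ₗ
      (TensorProduct.assoc k B B B).symm.toLinearMap with hT
  have hTapp : ∀ x y z : B, T (x ⊗ₜ (y ⊗ₜ z)) = (S x * y) ⊗ₜ z := by
    intro x y z
    simp [hT]
  have key2 := congrArg T key
  simp only [map_sum, hTapp] at key2
  calc ∑ i ∈ r.index, (((TensorProduct.mk k B B).flip 1) ∘ₗ S) (r.left i) *
        Coalgebra.comul (R := k) (r.right i)
      = ∑ i ∈ r.index, ∑ j ∈ (r2 i).index,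
          (S (r.left i) * (r2 i).left j) ⊗ₜ[k] (r2 i).right j := by
        refine Finset.sum_congr rfl fun i _ => ?_
        rw [← (r2 i).eq, Finset.mul_sum]
        refine Finset.sum_congr rfl fun j _ => ?_
        simp [Algebra.TensorProduct.tmul_mul_tmul]
    _ = ∑ i ∈ r.index, ∑ j ∈ (r1 i).index,
          (S ((r1 i).left j) * (r1 i).right j) ⊗ₜ[k] r.right i := key2.symm
    _ = ∑ i ∈ r.index, (algebraMap k B (Coalgebra.counit (R := k) (r.left i))) ⊗ₜ[k] r.right i := by
        refine Finset.sum_congr rfl fun i _ => ?_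
        rw [← TensorProduct.sum_tmul, HopfAlgebra.sum_antipode_mul_eq_algebraMap_counit (r1 i)]
    _ = TensorProduct.mk k B B 1 a := by
        have h := Coalgebra.sum_counit_tmul_eq r
        apply_fun TensorProduct.map (Algebra.linearMap k B) (LinearMap.id : B →ₗ[k] B) at h
        rw [map_sum] at h
        simpa using h

lemma conv_oneTmul_comulS :
    conv (TensorProduct.mk k B B 1) ((Coalgebra.comul : B →ₗ[k] B ⊗[k] B) ∘ₗ S) =
      ((TensorProduct.mk k B B).flip 1) ∘ₗ S := by
  rw [← conv_antipodeTmulOne_comul (k := k) (B := B), conv_assoc, conv_comul_comulS,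
    conv_counit_right]

/-- Pointwise form of the key identity `∑ (1 ⊗ b₁) · Δ(S b₂) = S b ⊗ 1`. -/
lemma key_pointwise {J : Type*} (b : B) (s : Coalgebra.Repr k b J) :
    ∑ i ∈ s.index, ((1 : B) ⊗ₜ[k] s.left i) * Coalgebra.comul (R := k) (S (s.right i)) =
      S b ⊗ₜ[k] (1 : B) := by
  have h := congrFun (congrArg DFunLike.coe (conv_oneTmul_comulS (k := k) (B := B))) b
  rw [conv_repr _ _ s] at h
  simpa using h

end HopfKey
section Main

variable {k A B : Type*} [CommSemiring k] [Ring A] [Ring B]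
  [HopfAlgebra k A] [HopfAlgebra k B]
variable (ι : B →ₐc[k] A) (ϖ : A →ₐc[k] B)

lemma antipode_one' : HopfAlgebra.antipode (R := k) (1 : B) = 1 := by
  have := HopfAlgebra.mul_antipode_rTensor_comul_apply (R := k) (A := B) (a := 1)
  simpa [Algebra.TensorProduct.one_def] using this

lemma map_id_pi_mul (u v : A ⊗[k] A) :
    TensorProduct.map LinearMap.id (ϖ : A →ₗ[k] B) (u * v) =
      TensorProduct.map LinearMap.id (ϖ : A →ₗ[k] B) u *
        TensorProduct.map LinearMap.id (ϖ : A →ₗ[k] B) v := by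
  induction u using TensorProduct.induction_on with
  | zero => simp
  | add x y hx hy => simp [add_mul, hx, hy]
  | tmul x1 x2 =>
    induction v using TensorProduct.induction_on with
    | zero => simp
    | add x y hx hy => simp [mul_add, hx, hy]
    | tmul y1 y2 => simp [Algebra.TensorProduct.tmul_mul_tmul]

lemma map_id_pi_map_iota (hretract : ∀ b : B, ϖ (ι b) = b) (t : B ⊗[k] B) :
    TensorProduct.map LinearMap.id (ϖ : A →ₗ[k] B)
      (TensorProduct.map (ι : B →ₗ[k] A) (ι : B →ₗ[k] A) t) =
      TensorProduct.map (ι : B →ₗ[k] A) LinearMap.id t := by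
  induction t using TensorProduct.induction_on with
  | zero => simp
  | add x y hx hy => simp [hx, hy]
  | tmul x y => simp [hretract]

lemma oneTmul_mul_mapIota (c : B) (t : B ⊗[k] B) :
    ((1 : A) ⊗ₜ[k] c) * TensorProduct.map (ι : B →ₗ[k] A) LinearMap.id t =
      TensorProduct.map (ι : B →ₗ[k] A) LinearMap.id (((1 : B) ⊗ₜ[k] c) * t) := by
  induction t using TensorProduct.induction_on with
  | zero => simp
  | add x y hx hy => simp [mul_add, hx, hy]
  | tmul x y => simp [Algebra.TensorProduct.tmul_mul_tmul]

lemma chi_comul {J : Type*} (e : B) (s : Coalgebra.Repr k e J) :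
    ∑ j ∈ s.index, ((1 : A) ⊗ₜ[k] s.left j) *
        TensorProduct.map (ι : B →ₗ[k] A) LinearMap.id
          (Coalgebra.comul (R := k) (HopfAlgebra.antipode (R := k) (s.right j))) =
      ι (HopfAlgebra.antipode (R := k) e) ⊗ₜ[k] (1 : B) := by
  have h1 : ∀ j ∈ s.index, ((1 : A) ⊗ₜ[k] s.left j) *
        TensorProduct.map (ι : B →ₗ[k] A) LinearMap.id
          (Coalgebra.comul (R := k) (HopfAlgebra.antipode (R := k) (s.right j))) =
      TensorProduct.map (ι : B →ₗ[k] A) LinearMap.id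
        (((1 : B) ⊗ₜ[k] s.left j) *
          Coalgebra.comul (R := k) (HopfAlgebra.antipode (R := k) (s.right j))) :=
    fun j _ => oneTmul_mul_mapIota ι _ _
  rw [Finset.sum_congr rfl h1, ← map_sum, key_pointwise e s]
  simp

lemma Pi_coinvariant (hretract : ∀ b : B, ϖ (ι b) = b) (a : A) :
    TensorProduct.map LinearMap.id (ϖ : A →ₗ[k] B)
      (Coalgebra.comul (R := k) (LinearMap.mul' k A
        (TensorProduct.map LinearMap.id
          ((ι : B →ₗ[k] A) ∘ₗ HopfAlgebra.antipode (R := k) ∘ₗ (ϖ : A →ₗ[k] B))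
          (Coalgebra.comul (R := k) a)))) =
      LinearMap.mul' k A
        (TensorProduct.map LinearMap.id
          ((ι : B →ₗ[k] A) ∘ₗ HopfAlgebra.antipode (R := k) ∘ₗ (ϖ : A →ₗ[k] B))
          (Coalgebra.comul (R := k) a)) ⊗ₜ[k] (1 : B) := by
  set r := ℛ k a with hrdef
  set r1 : ∀ i : r.ι, Coalgebra.Repr k (r.left i) (_ × _) := fun i => ℛ k (r.left i) with hr1
  set r2 : ∀ i : r.ι, Coalgebra.Repr k (r.right i) (_ × _) := fun i => ℛ k (r.right i) with hr2
  have hx : LinearMap.mul' k A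
      (TensorProduct.map LinearMap.id
        ((ι : B →ₗ[k] A) ∘ₗ HopfAlgebra.antipode (R := k) ∘ₗ (ϖ : A →ₗ[k] B))
        (Coalgebra.comul (R := k) a)) =
      ∑ i ∈ r.index, r.left i * ι (HopfAlgebra.antipode (R := k) (ϖ (r.right i))) := by
    rw [← r.eq, map_sum, map_sum]
    simp
  rw [hx, map_sum, map_sum]
  -- Ψ sends w to (ι ⊗ id)(Δ_B (S (ϖ w)))
  set Ψ : A →ₗ[k] A ⊗[k] B :=
    TensorProduct.map (ι : B →ₗ[k] A) LinearMap.id ∘ₗ (Coalgebra.comul (R := k)) ∘ₗ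
      HopfAlgebra.antipode (R := k) ∘ₗ (ϖ : A →ₗ[k] B) with hΨ
  have step2 : ∀ i ∈ r.index,
      TensorProduct.map LinearMap.id (ϖ : A →ₗ[k] B)
        (Coalgebra.comul (R := k)
          (r.left i * ι (HopfAlgebra.antipode (R := k) (ϖ (r.right i))))) =
      TensorProduct.map LinearMap.id (ϖ : A →ₗ[k] B)
        (Coalgebra.comul (R := k) (r.left i)) * Ψ (r.right i) := by
    intro i _
    rw [Bialgebra.comul_mul, map_id_pi_mul]
    congr 1
    rw [← CoalgHomClass.map_comp_comul_apply ι]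
    rw [map_id_pi_map_iota ι ϖ hretract]
    simp [hΨ]
  rw [Finset.sum_congr rfl step2]
  -- the big rearrangement map
  set Φ : A ⊗[k] (A ⊗[k] A) →ₗ[k] A ⊗[k] B :=
    LinearMap.mul' k (A ⊗[k] B) ∘ₗ
      TensorProduct.map (TensorProduct.map LinearMap.id (ϖ : A →ₗ[k] B)) Ψ ∘ₗ
      (TensorProduct.assoc k A A A).symm.toLinearMap with hΦ
  have hΦapp : ∀ u v w : A, Φ (u ⊗ₜ (v ⊗ₜ w)) = (u ⊗ₜ[k] ϖ v) * Ψ w := by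
    intro u v w
    simp [hΦ]
  have expand : ∀ i ∈ r.index,
      TensorProduct.map LinearMap.id (ϖ : A →ₗ[k] B)
        (Coalgebra.comul (R := k) (r.left i)) * Ψ (r.right i) =
      ∑ j ∈ (r1 i).index, Φ ((r1 i).left j ⊗ₜ ((r1 i).right j ⊗ₜ r.right i)) := by
    intro i _
    rw [← (r1 i).eq, map_sum, Finset.sum_mul]
    exact Finset.sum_congr rfl fun j _ => by rw [hΦapp]; simp
  rw [Finset.sum_congr rfl expand]
  have key := congrArg Φ (Coalgebra.sum_tmul_tmul_eq r r1 r2)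
  rw [map_sum, map_sum] at key
  simp only [map_sum] at key
  rw [key]
  -- now evaluate each i
  have hs : ∀ i : r.ι, (∑ j ∈ (r2 i).index,
      ϖ ((r2 i).left j) ⊗ₜ[k] ϖ ((r2 i).right j)) = Coalgebra.comul (R := k) (ϖ (r.right i)) := by
    intro i
    have h := congrArg (TensorProduct.map (ϖ : A →ₗ[k] B) (ϖ : A →ₗ[k] B)) (r2 i).eq
    rw [map_sum] at h
    simpa using h
  have inner : ∀ i ∈ r.index,
      ∑ j ∈ (r2 i).index, Φ (r.left i ⊗ₜ ((r2 i).left j ⊗ₜ (r2 i).right j)) =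
      (r.left i * ι (HopfAlgebra.antipode (R := k) (ϖ (r.right i)))) ⊗ₜ[k] (1 : B) := by
    intro i _
    let s : Coalgebra.Repr k (ϖ (r.right i)) (A × A) :=
      { index := (r2 i).index
        left := fun j => ϖ ((r2 i).left j)
        right := fun j => ϖ ((r2 i).right j)
        eq := hs i }
    have hchi := chi_comul ι (ϖ (r.right i)) s
    calc ∑ j ∈ (r2 i).index, Φ (r.left i ⊗ₜ ((r2 i).left j ⊗ₜ (r2 i).right j))
        = ∑ j ∈ (r2 i).index, (r.left i ⊗ₜ[k] (1 : B)) *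
            (((1 : A) ⊗ₜ[k] ϖ ((r2 i).left j)) *
              TensorProduct.map (ι : B →ₗ[k] A) LinearMap.id
                (Coalgebra.comul (R := k)
                  (HopfAlgebra.antipode (R := k) (ϖ ((r2 i).right j))))) := by
          refine Finset.sum_congr rfl fun j _ => ?_
          rw [hΦapp, ← mul_assoc, Algebra.TensorProduct.tmul_mul_tmul, mul_one, one_mul]
          simp [hΨ]
      _ = (r.left i ⊗ₜ[k] (1 : B)) *
            (ι (HopfAlgebra.antipode (R := k) (ϖ (r.right i))) ⊗ₜ[k] (1 : B)) := by
          rw [← Finset.mul_sum, hchi]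
      _ = (r.left i * ι (HopfAlgebra.antipode (R := k) (ϖ (r.right i)))) ⊗ₜ[k] (1 : B) := by
          rw [Algebra.TensorProduct.tmul_mul_tmul, mul_one]
  rw [Finset.sum_congr rfl inner, ← TensorProduct.sum_tmul]

end Main


/-- Let `A` be a Hopf algebra with a Hopf algebra projection: `ι : B → A`
a Hopf algebra inclusion and `ϖ : A → B` a Hopf algebra map with `ϖ ∘ ι = id`.  The set
of right coinvariants `R = {a ∈ A | (id ⊗ ϖ)Δ(a) = a ⊗ 1}` coincides with the set
`{Σ a₁ S(ϖ(a₂)) | a ∈ A}`. -/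
theorem coinvariants_eq_range
    (k A B : Type*) [Field k] [Ring A] [Ring B] [HopfAlgebra k A] [HopfAlgebra k B]
    (ι : B →ₐc[k] A) (ϖ : A →ₐc[k] B) (hinj : Function.Injective ι)
    (hretract : ∀ b : B, ϖ (ι b) = b) :
    {a : A | TensorProduct.map (LinearMap.id) (ϖ : A →ₗ[k] B)
        (Coalgebra.comul (R := k) a) = a ⊗ₜ[k] (1 : B)} =
      Set.range (LinearMap.mul' k A ∘ₗ
        TensorProduct.map LinearMap.id
          ((ι : B →ₗ[k] A) ∘ₗ HopfAlgebra.antipode (R := k) ∘ₗ (ϖ : A →ₗ[k] B)) ∘ₗ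
        Coalgebra.comul (R := k)) := by
  ext x
  simp only [Set.mem_setOf_eq, Set.mem_range, LinearMap.comp_apply]
  constructor
  · intro hx
    refine ⟨x, ?_⟩
    have hsplit : ∀ t : A ⊗[k] A,
        TensorProduct.map LinearMap.id
          ((ι : B →ₗ[k] A) ∘ₗ HopfAlgebra.antipode (R := k) ∘ₗ (ϖ : A →ₗ[k] B)) t =
        TensorProduct.map LinearMap.id ((ι : B →ₗ[k] A) ∘ₗ HopfAlgebra.antipode (R := k))
          (TensorProduct.map LinearMap.id (ϖ : A →ₗ[k] B) t) := by
      intro t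
      induction t using TensorProduct.induction_on with
      | zero => simp
      | add u v hu hv => rw [map_add, map_add, map_add, hu, hv]
      | tmul u v => simp
    rw [hsplit, hx]
    simp [antipode_one']
  · rintro ⟨a, rfl⟩
    exact Pi_coinvariant ι ϖ hretract a
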